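/- Let 𝒢 be a sub-σ-algebra of 𝓕 and let G : H × H → L⁰(𝒢) be a bilinear mapping (in the P-a.s. sense: for all (u₁,v₁),(u₂,v₂) ∈ H × H and α₁,α₂ ∈ ℝ, G(α₁u₁+u₂, v₁) = α₁G(u₁,v₁) + G(u₂,v₁) P-a.s. and G(u₁, α₂v₁+v₂) = α₂G(u₁,v₁) + G(u₁,v₂) P-a.s.). Suppose there exists a nonnegative g ∈ L¹(𝒢) such that |G(u,v)| ≤ g ‖u‖_H ‖v‖_H P-a.s. for every (u,v) ∈ H × H. Then there exists a weakly 𝒢-measurable map Ḡ : Ω → 𝔏₂(H×H) with E[‖Ḡ‖_{𝔏₂(H×H)}] < ∞ such that Ḡ(u,v) = G(u,v) P-a.s. for every (u,v) ∈ H × H, and moreover ‖Ḡ‖_{𝔏₂(H×H)} ≤ g P-a.s. -/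

import Mathlib

open MeasureTheory Filter Metric Set
open scoped RealInnerProductSpace Topology

private lemma aux_opNorm_le {H : Type*} [NormedAddCommGroup H] [NormedSpace ℝ H]
    {B : H →L[ℝ] H →L[ℝ] ℝ} {s : Set H}
    (hs : Metric.closedBall (0:H) 1 ⊆ closure s) {C : ℝ} (hC : 0 ≤ C)
    (h : ∀ x ∈ s, ∀ y ∈ s, |B x y| ≤ C) : ‖B‖ ≤ C := by
  have hK : ∀ x ∈ Metric.closedBall (0:H) 1, ∀ y ∈ Metric.closedBall (0:H) 1,
      |B x y| ≤ C := by
    intro x hx y hy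
    have hcl : IsClosed {p : H × H | |B p.1 p.2| ≤ C} :=
      isClosed_le (continuous_abs.comp B.continuous₂) continuous_const
    have hsub : s ×ˢ s ⊆ {p : H × H | |B p.1 p.2| ≤ C} := fun p hp => h _ hp.1 _ hp.2
    have hcls : closure (s ×ˢ s) ⊆ {p : H × H | |B p.1 p.2| ≤ C} :=
      hcl.closure_subset_iff.2 hsub
    have hmem : (x, y) ∈ closure (s ×ˢ s) := by
      rw [closure_prod_eq]; exact ⟨hs hx, hs hy⟩
    exact hcls hmem
  refine ContinuousLinearMap.opNorm_le_of_unit_norm hC fun x hx => ?_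
  refine ContinuousLinearMap.opNorm_le_of_unit_norm hC fun y hy => ?_
  have hx1 : x ∈ Metric.closedBall (0:H) 1 := by
    simp [Metric.mem_closedBall, dist_zero_right, hx.le]
  have hy1 : y ∈ Metric.closedBall (0:H) 1 := by
    simp [Metric.mem_closedBall, dist_zero_right, hy.le]
  simpa [Real.norm_eq_abs] using hK x hx1 y hy1

private lemma aux_dense_ball {H : Type*} [NormedAddCommGroup H] [NormedSpace ℝ H]
    {D : Set H} (hD : Dense D) :
    Metric.closedBall (0:H) 1 ⊆ closure {x | x ∈ D ∧ ‖x‖ < 1} := by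
  intro x hx
  rw [Metric.mem_closedBall, dist_zero_right] at hx
  rw [Metric.mem_closure_iff]
  intro ε hε
  set δ : ℝ := min (ε/2) 2⁻¹ with hδdef
  have hδpos : 0 < δ := lt_min (by linarith) (by norm_num)
  have hδle : δ ≤ ε/2 := min_le_left _ _
  have hδle2 : δ ≤ 2⁻¹ := min_le_right _ _
  set x' : H := (1 - δ) • x with hx'def
  have hx'norm : ‖x'‖ ≤ 1 - δ := by
    rw [hx'def, norm_smul, Real.norm_eq_abs,
      abs_of_nonneg (by linarith : (0:ℝ) ≤ 1 - δ)]
    nlinarith [norm_nonneg x]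
  have hr : 0 < min δ (1 - ‖x'‖) := lt_min hδpos (by linarith)
  obtain ⟨y, hyD, hy⟩ := Metric.mem_closure_iff.1 (hD x') _ hr
  have hy1 : dist x' y < 1 - ‖x'‖ := lt_of_lt_of_le hy (min_le_right _ _)
  have hy2 : dist x' y < δ := lt_of_lt_of_le hy (min_le_left _ _)
  refine ⟨y, ⟨hyD, ?_⟩, ?_⟩
  · have h1 : ‖y‖ ≤ ‖x'‖ + ‖y - x'‖ := by
      calc ‖y‖ = ‖x' + (y - x')‖ := by rw [show x' + (y - x') = y from by abel]
      _ ≤ ‖x'‖ + ‖y - x'‖ := norm_add_le _ _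
    have h2 : ‖y - x'‖ = dist x' y := by rw [dist_eq_norm, norm_sub_rev]
    linarith
  · have hxx' : dist x x' ≤ δ := by
      have hxe : x - (1 - δ) • x = δ • x := by
        rw [sub_smul, one_smul]; abel
      rw [dist_eq_norm, hx'def, hxe, norm_smul, Real.norm_eq_abs,
        abs_of_nonneg hδpos.le]
      nlinarith
    calc dist x y ≤ dist x x' + dist x' y := dist_triangle _ _ _
    _ < δ + δ := by linarith [dist_nonneg (x := x) (y := x')]
    _ ≤ ε := by linarith

/-- **Aggregation of an a.s.-bilinear random form into a bounded bilinear-form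
valued random variable** (Theorem 2.4 (i) of the paper, sufficiency direction).
If `G : H × H → L⁰(𝒢)` is bilinear in the `P`-a.s. sense and dominated by a
nonnegative `g ∈ L¹(𝒢)` via `|G(u,v)| ≤ g ‖u‖ ‖v‖` a.s. for each `(u,v)`, then
there is a weakly `𝒢`-measurable map `Ḡ : Ω → 𝔏₂(H×H)` with integrable norm
such that `Ḡ(u,v) = G(u,v)` a.s. for every `(u,v)`, and `‖Ḡ‖ ≤ g` a.s. -/
theorem aggregation_of_bilinear_random_form
    {Ω H : Type*} [NormedAddCommGroup H] [InnerProductSpace ℝ H] [CompleteSpace H]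
    [TopologicalSpace.SeparableSpace H]
    {m0 : MeasurableSpace Ω} (μ : Measure Ω) [IsProbabilityMeasure μ]
    (m : MeasurableSpace Ω) (hm : m ≤ m0)
    (G : H → H → Ω → ℝ)
    (hGmeas : ∀ u v : H, Measurable[m] (G u v))
    (hlinL : ∀ (u₁ u₂ v : H) (c : ℝ),
      ∀ᵐ ω ∂μ, G (c • u₁ + u₂) v ω = c * G u₁ v ω + G u₂ v ω)
    (hlinR : ∀ (u v₁ v₂ : H) (c : ℝ),
      ∀ᵐ ω ∂μ, G u (c • v₁ + v₂) ω = c * G u v₁ ω + G u v₂ ω)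
    (g : Ω → ℝ) (hgmeas : Measurable[m] g) (hgint : Integrable g μ)
    (hg0 : ∀ᵐ ω ∂μ, 0 ≤ g ω)
    (hdom : ∀ u v : H, ∀ᵐ ω ∂μ, |G u v ω| ≤ g ω * ‖u‖ * ‖v‖) :
    ∃ Gb : Ω → H →L[ℝ] H →L[ℝ] ℝ,
      (∀ u v : H, Measurable[m] fun ω => Gb ω u v) ∧
      Integrable (fun ω => ‖Gb ω‖) μ ∧
      (∀ u v : H, (fun ω => Gb ω u v) =ᵐ[μ] G u v) ∧
      (∀ᵐ ω ∂μ, ‖Gb ω‖ ≤ g ω) := by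
  classical
  letI : Module ℚ H := Module.compHom H (Rat.castHom ℝ)
  -- a countable dense ℚ-subspace
  obtain ⟨d, hd⟩ := TopologicalSpace.exists_dense_seq H
  set D : Set H := (Submodule.span ℚ (Set.range d) : Set H) with hDdef
  have hDc : D.Countable := by
    have : Countable (Submodule.span ℚ (Set.range d)) := inferInstance
    exact Set.countable_coe_iff.mp this
  have hDdense : Dense D := hd.mono Submodule.subset_span
  have hD0 : (0:H) ∈ D := Submodule.zero_mem _
  have hDadd : ∀ x ∈ D, ∀ y ∈ D, x + y ∈ D := fun x hx y hy => Submodule.add_mem _ hx hy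
  have hDsub : ∀ x ∈ D, ∀ y ∈ D, x - y ∈ D := fun x hx y hy => Submodule.sub_mem _ hx hy
  have hDsmul : ∀ (q : ℚ), ∀ x ∈ D, (q:ℝ) • x ∈ D := fun q x hx =>
    Submodule.smul_mem _ q hx
  -- the good set S
  set S₁ : Set Ω := {ω | 0 ≤ g ω} with hS₁def
  set S₂ : Set Ω := ⋂ x ∈ D, ⋂ y ∈ D, {ω | |G x y ω| ≤ g ω * ‖x‖ * ‖y‖} with hS₂def
  set S₃ : Set Ω := ⋂ x ∈ D, ⋂ y ∈ D, ⋂ z ∈ D, ⋂ q : ℚ,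
      ({ω | G ((q:ℝ) • x + y) z ω = (q:ℝ) * G x z ω + G y z ω} ∩
       {ω | G z ((q:ℝ) • x + y) ω = (q:ℝ) * G z x ω + G z y ω}) with hS₃def
  set S : Set Ω := S₁ ∩ S₂ ∩ S₃ with hSdef
  have hSm : MeasurableSet[m] S := by
    refine MeasurableSet.inter (MeasurableSet.inter ?_ ?_) ?_
    · exact measurableSet_le measurable_const hgmeas
    · refine MeasurableSet.biInter hDc fun x hx => MeasurableSet.biInter hDc fun y hy => ?_
      exact measurableSet_le (hGmeas x y).abs ((hgmeas.mul_const _).mul_const _)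
    · refine MeasurableSet.biInter hDc fun x hx => MeasurableSet.biInter hDc fun y hy =>
        MeasurableSet.biInter hDc fun z hz => MeasurableSet.iInter fun q => ?_
      exact (measurableSet_eq_fun (hGmeas _ _)
          (((hGmeas x z).const_mul _).add (hGmeas y z))).inter
        (measurableSet_eq_fun (hGmeas _ _)
          (((hGmeas z x).const_mul _).add (hGmeas z y)))
  have hSae : ∀ᵐ ω ∂μ, ω ∈ S := by
    have h2 : ∀ᵐ ω ∂μ, ∀ x ∈ D, ∀ y ∈ D, |G x y ω| ≤ g ω * ‖x‖ * ‖y‖ :=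
      (ae_ball_iff hDc).2 fun x hx => (ae_ball_iff hDc).2 fun y hy => hdom x y
    have h3 : ∀ᵐ ω ∂μ, ∀ x ∈ D, ∀ y ∈ D, ∀ z ∈ D, ∀ q : ℚ,
        (G ((q:ℝ) • x + y) z ω = (q:ℝ) * G x z ω + G y z ω ∧
         G z ((q:ℝ) • x + y) ω = (q:ℝ) * G z x ω + G z y ω) :=
      (ae_ball_iff hDc).2 fun x hx => (ae_ball_iff hDc).2 fun y hy =>
        (ae_ball_iff hDc).2 fun z hz => ae_all_iff.2 fun q =>
          (hlinL x y z (q:ℝ)).and (hlinR z x y (q:ℝ))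
    filter_upwards [hg0, h2, h3] with ω hω1 hω2 hω3
    refine ⟨⟨hω1, ?_⟩, ?_⟩
    · simp only [hS₂def, Set.mem_iInter, Set.mem_setOf_eq]
      exact fun x hx y hy => hω2 x hx y hy
    · simp only [hS₃def, Set.mem_iInter, Set.mem_inter_iff, Set.mem_setOf_eq]
      exact fun x hx y hy z hz q => hω3 x hx y hy z hz q
  have hSnull : μ Sᶜ = 0 := by
    have := ae_iff.1 hSae
    simpa [Set.compl_def] using this
  -- pointwise properties on S
  have hg0' : ∀ ω ∈ S, 0 ≤ g ω := fun ω hω => hω.1.1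
  have hdom' : ∀ ω ∈ S, ∀ x ∈ D, ∀ y ∈ D, |G x y ω| ≤ g ω * ‖x‖ * ‖y‖ := by
    intro ω hω x hx y hy
    have := hω.1.2
    simp only [hS₂def, Set.mem_iInter, Set.mem_setOf_eq] at this
    exact this x hx y hy
  have hlin' : ∀ ω ∈ S, ∀ x ∈ D, ∀ y ∈ D, ∀ z ∈ D, ∀ q : ℚ,
      (G ((q:ℝ) • x + y) z ω = (q:ℝ) * G x z ω + G y z ω ∧
       G z ((q:ℝ) • x + y) ω = (q:ℝ) * G z x ω + G z y ω) := by
    intro ω hω x hx y hy z hz q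
    have := hω.2
    simp only [hS₃def, Set.mem_iInter, Set.mem_inter_iff, Set.mem_setOf_eq] at this
    exact this x hx y hy z hz q
  have hG0L : ∀ ω ∈ S, ∀ y ∈ D, G 0 y ω = 0 := by
    intro ω hω y hy
    have := hdom' ω hω 0 hD0 y hy
    simp only [norm_zero, mul_zero, zero_mul] at this
    exact abs_eq_zero.1 (le_antisymm this (abs_nonneg _))
  have hG0R : ∀ ω ∈ S, ∀ y ∈ D, G y 0 ω = 0 := by
    intro ω hω y hy
    have := hdom' ω hω y hy 0 hD0
    simp only [norm_zero, mul_zero] at this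
    exact abs_eq_zero.1 (le_antisymm this (abs_nonneg _))
  have hGaddL : ∀ ω ∈ S, ∀ x ∈ D, ∀ y ∈ D, ∀ z ∈ D,
      G (x + y) z ω = G x z ω + G y z ω := by
    intro ω hω x hx y hy z hz
    have := (hlin' ω hω x hx y hy z hz 1).1
    simpa using this
  have hGaddR : ∀ ω ∈ S, ∀ x ∈ D, ∀ y ∈ D, ∀ z ∈ D,
      G z (x + y) ω = G z x ω + G z y ω := by
    intro ω hω x hx y hy z hz
    have := (hlin' ω hω x hx y hy z hz 1).2
    simpa using this
  have hGsmulL : ∀ ω ∈ S, ∀ x ∈ D, ∀ z ∈ D, ∀ q : ℚ,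
      G ((q:ℝ) • x) z ω = (q:ℝ) * G x z ω := by
    intro ω hω x hx z hz q
    have := (hlin' ω hω x hx 0 hD0 z hz q).1
    simpa [hG0L ω hω z hz] using this
  have hGsmulR : ∀ ω ∈ S, ∀ x ∈ D, ∀ z ∈ D, ∀ q : ℚ,
      G z ((q:ℝ) • x) ω = (q:ℝ) * G z x ω := by
    intro ω hω x hx z hz q
    have := (hlin' ω hω x hx 0 hD0 z hz q).2
    simpa [hG0R ω hω z hz] using this
  -- difference estimate on D
  have hdiffD : ∀ ω ∈ S, ∀ x ∈ D, ∀ x' ∈ D, ∀ y ∈ D, ∀ y' ∈ D,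
      |G x y ω - G x' y' ω| ≤ g ω * ‖x - x'‖ * ‖y‖ + g ω * ‖x'‖ * ‖y - y'‖ := by
    intro ω hω x hx x' hx' y hy y' hy'
    have h1 : G x y ω = G (x - x') y ω + G x' y ω := by
      have := hGaddL ω hω (x - x') (hDsub x hx x' hx') x' hx' y hy
      simpa [sub_add_cancel] using this
    have h2 : G x' y ω = G x' (y - y') ω + G x' y' ω := by
      have := hGaddR ω hω (y - y') (hDsub y hy y' hy') y' hy' x' hx'
      simpa [sub_add_cancel] using this
    have heq : G x y ω - G x' y' ω = G (x - x') y ω + G x' (y - y') ω := by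
      rw [h1, h2]; ring
    rw [heq]
    calc |G (x - x') y ω + G x' (y - y') ω|
        ≤ |G (x - x') y ω| + |G x' (y - y') ω| := abs_add_le _ _
      _ ≤ g ω * ‖x - x'‖ * ‖y‖ + g ω * ‖x'‖ * ‖y - y'‖ := by
          gcongr
          · exact hdom' ω hω _ (hDsub x hx x' hx') _ hy
          · exact hdom' ω hω _ hx' _ (hDsub y hy y' hy')
  -- approximating sequences
  have happrox : ∀ (u : H) (n : ℕ),
      ∃ p : H, p ∈ D ∧ ‖p - u‖ < 1 / ((n:ℝ) + 1) ∧ (u ∈ D → p = u) := by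
    intro u n
    have hpos : (0:ℝ) < 1 / ((n:ℝ) + 1) := by positivity
    by_cases h : u ∈ D
    · exact ⟨u, h, by simpa using hpos, fun _ => rfl⟩
    · obtain ⟨p, hpD, hp⟩ := Metric.mem_closure_iff.1 (hDdense u) _ hpos
      refine ⟨p, hpD, ?_, fun hu => absurd hu h⟩
      rwa [dist_eq_norm, norm_sub_rev] at hp
  choose a haD hanear haid using happrox
  have hanear' : ∀ u n, ‖a u n - u‖ ≤ 1 / ((n:ℝ) + 1) := fun u n => (hanear u n).le
  have haTends : ∀ u, Tendsto (fun n => a u n) atTop (𝓝 u) := by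
    intro u
    rw [tendsto_iff_dist_tendsto_zero]
    refine squeeze_zero (fun n => dist_nonneg) (fun n => ?_)
      tendsto_one_div_add_atTop_nhds_zero_nat
    rw [dist_eq_norm]; exact hanear' u n
  have hinv_le : ∀ {N n : ℕ}, N ≤ n → 1 / ((n:ℝ) + 1) ≤ 1 / ((N:ℝ) + 1) := by
    intro N n h
    apply one_div_le_one_div_of_le (by positivity)
    have : (N:ℝ) ≤ (n:ℝ) := Nat.cast_le.mpr h
    linarith
  have hinv_le1 : ∀ n : ℕ, 1 / ((n:ℝ) + 1) ≤ 1 := by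
    intro n
    rw [div_le_one (by positivity)]
    have : (0:ℝ) ≤ (n:ℝ) := Nat.cast_nonneg n
    linarith
  have hanorm : ∀ u n, ‖a u n‖ ≤ ‖u‖ + 1 := by
    intro u n
    calc ‖a u n‖ = ‖u + (a u n - u)‖ := by
          rw [show u + (a u n - u) = a u n from by abel]
      _ ≤ ‖u‖ + ‖a u n - u‖ := norm_add_le _ _
      _ ≤ ‖u‖ + 1 := by linarith [hanear' u n, hinv_le1 n]
  have hsubdiff : ∀ u (n m N : ℕ), N ≤ n → N ≤ m →
      ‖a u n - a u m‖ ≤ 2 / ((N:ℝ) + 1) := by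
    intro u n m N hn hm
    calc ‖a u n - a u m‖ = ‖(a u n - u) + (u - a u m)‖ := by
          rw [show (a u n - u) + (u - a u m) = a u n - a u m from by abel]
      _ ≤ ‖a u n - u‖ + ‖u - a u m‖ := norm_add_le _ _
      _ ≤ 1 / ((N:ℝ) + 1) + 1 / ((N:ℝ) + 1) := by
          have h1 := (hanear' u n).trans (hinv_le hn)
          have h2 : ‖u - a u m‖ ≤ 1 / ((N:ℝ) + 1) := by
            rw [norm_sub_rev]; exact (hanear' u m).trans (hinv_le hm)
          linarith
      _ = 2 / ((N:ℝ) + 1) := by ring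
  have ht2 : Tendsto (fun N : ℕ => 2 / ((N:ℝ) + 1)) atTop (𝓝 0) := by
    have := tendsto_one_div_add_atTop_nhds_zero_nat.const_mul (2:ℝ)
    simpa [mul_one_div, div_eq_mul_inv] using this
  -- Cauchy and limits
  have hCauchy : ∀ ω ∈ S, ∀ u v, CauchySeq (fun n => G (a u n) (a v n) ω) := by
    intro ω hω u v
    refine cauchySeq_of_le_tendsto_0
      (fun N => g ω * (2 / ((N:ℝ) + 1)) * (‖v‖ + 1) + g ω * (‖u‖ + 1) * (2 / ((N:ℝ) + 1)))
      ?_ ?_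
    · intro n mm N hn hmm
      rw [Real.dist_eq]
      calc |G (a u n) (a v n) ω - G (a u mm) (a v mm) ω|
          ≤ g ω * ‖a u n - a u mm‖ * ‖a v n‖ + g ω * ‖a u mm‖ * ‖a v n - a v mm‖ :=
            hdiffD ω hω _ (haD u n) _ (haD u mm) _ (haD v n) _ (haD v mm)
        _ ≤ g ω * (2 / ((N:ℝ) + 1)) * (‖v‖ + 1) + g ω * (‖u‖ + 1) * (2 / ((N:ℝ) + 1)) := by
            have hgw : 0 ≤ g ω := hg0' ω hω
            gcongr <;> first
              | exact hgw
              | exact hsubdiff u n mm N hn hmm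
              | exact hsubdiff v n mm N hn hmm
              | exact hanorm v n
              | exact hanorm u mm
    · have h1 : Tendsto (fun N : ℕ => g ω * (2 / ((N:ℝ) + 1)) * (‖v‖ + 1)) atTop (𝓝 0) := by
        have := (ht2.const_mul (g ω)).mul_const (‖v‖ + 1)
        simpa using this
      have h2 : Tendsto (fun N : ℕ => g ω * (‖u‖ + 1) * (2 / ((N:ℝ) + 1))) atTop (𝓝 0) := by
        have := ht2.const_mul (g ω * (‖u‖ + 1))
        simpa [mul_assoc] using this
      simpa using h1.add h2
  set f : Ω → H → H → ℝ :=
    fun ω u v => limUnder atTop (fun n => G (a u n) (a v n) ω) with hfdef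
  have hflim : ∀ ω ∈ S, ∀ u v,
      Tendsto (fun n => G (a u n) (a v n) ω) atTop (𝓝 (f ω u v)) := by
    intro ω hω u v
    obtain ⟨l, hl⟩ := cauchySeq_tendsto_of_complete (hCauchy ω hω u v)
    have : f ω u v = l := hl.limUnder_eq
    rw [this]; exact hl
  -- limits along arbitrary D-valued sequences
  have hkey : ∀ ω ∈ S, ∀ u v (s t : ℕ → H), (∀ n, s n ∈ D) → (∀ n, t n ∈ D) →
      Tendsto s atTop (𝓝 u) → Tendsto t atTop (𝓝 v) →
      Tendsto (fun n => G (s n) (t n) ω) atTop (𝓝 (f ω u v)) := by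
    intro ω hω u v s t hsD htD hs ht
    have hdiff0 : Tendsto (fun n => G (s n) (t n) ω - G (a u n) (a v n) ω) atTop (𝓝 0) := by
      refine squeeze_zero_norm
        (a := fun n => g ω * ‖s n - a u n‖ * ‖t n‖ + g ω * ‖a u n‖ * ‖t n - a v n‖)
        ?_ ?_
      · intro n
        rw [Real.norm_eq_abs]
        exact hdiffD ω hω _ (hsD n) _ (haD u n) _ (htD n) _ (haD v n)
      · have hn1 : Tendsto (fun n => ‖s n - a u n‖) atTop (𝓝 0) := by
          have := (hs.sub (haTends u)).norm
          simpa using this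
        have hn2 : Tendsto (fun n => ‖t n - a v n‖) atTop (𝓝 0) := by
          have := (ht.sub (haTends v)).norm
          simpa using this
        have h1 := (hn1.const_mul (g ω)).mul ht.norm
        have h2 := ((haTends u).norm.const_mul (g ω)).mul hn2
        have h1' : Tendsto (fun n => g ω * ‖s n - a u n‖ * ‖t n‖) atTop (𝓝 0) := by
          simpa using h1
        have h2' : Tendsto (fun n => g ω * ‖a u n‖ * ‖t n - a v n‖) atTop (𝓝 0) := by
          simpa [mul_assoc] using h2
        simpa using h1'.add h2'
    have := hdiff0.add (hflim ω hω u v)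
    simpa using this
  -- f agrees with G on D
  have hfD : ∀ ω ∈ S, ∀ u ∈ D, ∀ v ∈ D, f ω u v = G u v ω := by
    intro ω hω u hu v hv
    have h1 : (fun n => G (a u n) (a v n) ω) = fun _ => G u v ω := by
      funext n; rw [haid u n hu, haid v n hv]
    have h2 := hflim ω hω u v
    rw [h1] at h2
    exact (tendsto_nhds_unique h2 tendsto_const_nhds)
  -- bilinearity of f on S
  have hf_addL : ∀ ω ∈ S, ∀ u u' v, f ω (u + u') v = f ω u v + f ω u' v := by
    intro ω hω u u' v
    have hL := hkey ω hω (u + u') v (fun n => a u n + a u' n) (fun n => a v n)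
      (fun n => hDadd _ (haD u n) _ (haD u' n)) (haD v)
      ((haTends u).add (haTends u')) (haTends v)
    have heq : (fun n => G (a u n + a u' n) (a v n) ω)
        = fun n => G (a u n) (a v n) ω + G (a u' n) (a v n) ω := by
      funext n; exact hGaddL ω hω _ (haD u n) _ (haD u' n) _ (haD v n)
    rw [heq] at hL
    exact tendsto_nhds_unique hL ((hflim ω hω u v).add (hflim ω hω u' v))
  have hf_addR : ∀ ω ∈ S, ∀ u v v', f ω u (v + v') = f ω u v + f ω u v' := by
    intro ω hω u v v'
    have hL := hkey ω hω u (v + v') (fun n => a u n) (fun n => a v n + a v' n)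
      (haD u) (fun n => hDadd _ (haD v n) _ (haD v' n))
      (haTends u) ((haTends v).add (haTends v'))
    have heq : (fun n => G (a u n) (a v n + a v' n) ω)
        = fun n => G (a u n) (a v n) ω + G (a u n) (a v' n) ω := by
      funext n; exact hGaddR ω hω _ (haD v n) _ (haD v' n) _ (haD u n)
    rw [heq] at hL
    exact tendsto_nhds_unique hL ((hflim ω hω u v).add (hflim ω hω u v'))
  have hratseq : ∀ c : ℝ, ∃ q : ℕ → ℚ, Tendsto (fun n => (q n : ℝ)) atTop (𝓝 c) := by
    intro c
    have : ∀ n : ℕ, ∃ q : ℚ, |c - (q:ℝ)| < 1 / ((n:ℝ) + 1) := fun n =>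
      exists_rat_near c (by positivity)
    choose q hq using this
    refine ⟨q, ?_⟩
    rw [tendsto_iff_dist_tendsto_zero]
    refine squeeze_zero (fun n => dist_nonneg) (fun n => ?_)
      tendsto_one_div_add_atTop_nhds_zero_nat
    rw [Real.dist_eq, abs_sub_comm]
    exact (hq n).le
  have hf_smulL : ∀ ω ∈ S, ∀ (c : ℝ) u v, f ω (c • u) v = c * f ω u v := by
    intro ω hω c u v
    obtain ⟨q, hq⟩ := hratseq c
    have hL := hkey ω hω (c • u) v (fun n => ((q n : ℝ)) • a u n) (fun n => a v n)
      (fun n => hDsmul _ _ (haD u n)) (haD v)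
      (hq.smul (haTends u)) (haTends v)
    have heq : (fun n => G ((q n : ℝ) • a u n) (a v n) ω)
        = fun n => (q n : ℝ) * G (a u n) (a v n) ω := by
      funext n; exact hGsmulL ω hω _ (haD u n) _ (haD v n) (q n)
    rw [heq] at hL
    exact tendsto_nhds_unique hL (hq.mul (hflim ω hω u v))
  have hf_smulR : ∀ ω ∈ S, ∀ (c : ℝ) u v, f ω u (c • v) = c * f ω u v := by
    intro ω hω c u v
    obtain ⟨q, hq⟩ := hratseq c
    have hL := hkey ω hω u (c • v) (fun n => a u n) (fun n => ((q n : ℝ)) • a v n)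
      (haD u) (fun n => hDsmul _ _ (haD v n))
      (haTends u) (hq.smul (haTends v))
    have heq : (fun n => G (a u n) ((q n : ℝ) • a v n) ω)
        = fun n => (q n : ℝ) * G (a u n) (a v n) ω := by
      funext n; exact hGsmulR ω hω _ (haD v n) _ (haD u n) (q n)
    rw [heq] at hL
    exact tendsto_nhds_unique hL (hq.mul (hflim ω hω u v))
  have hf_bound : ∀ ω ∈ S, ∀ u v, |f ω u v| ≤ g ω * ‖u‖ * ‖v‖ := by
    intro ω hω u v
    have h1 : Tendsto (fun n => |G (a u n) (a v n) ω|) atTop (𝓝 |f ω u v|) :=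
      (hflim ω hω u v).abs
    have h2 : Tendsto (fun n => g ω * ‖a u n‖ * ‖a v n‖) atTop (𝓝 (g ω * ‖u‖ * ‖v‖)) := by
      exact (((haTends u).norm.const_mul (g ω)).mul (haTends v).norm)
    exact le_of_tendsto_of_tendsto' h1 h2 fun n =>
      hdom' ω hω _ (haD u n) _ (haD v n)
  -- globalize
  set F : Ω → H → H → ℝ := fun ω u v => if ω ∈ S then f ω u v else 0 with hFdef
  set gS : Ω → ℝ := fun ω => if ω ∈ S then g ω else 0 with hgSdef
  have hgS0 : ∀ ω, 0 ≤ gS ω := by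
    intro ω
    by_cases h : ω ∈ S
    · simp only [hgSdef, if_pos h]; exact hg0' ω h
    · simp [hgSdef, if_neg h]
  have hF_addL : ∀ ω (u u' v : H), F ω (u + u') v = F ω u v + F ω u' v := by
    intro ω u u' v
    by_cases h : ω ∈ S
    · simp only [hFdef, if_pos h]; exact hf_addL ω h u u' v
    · simp [hFdef, if_neg h]
  have hF_smulL : ∀ ω (c : ℝ) (u v : H), F ω (c • u) v = c * F ω u v := by
    intro ω c u v
    by_cases h : ω ∈ S
    · simp only [hFdef, if_pos h]; exact hf_smulL ω h c u v
    · simp [hFdef, if_neg h]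
  have hF_addR : ∀ ω (u v v' : H), F ω u (v + v') = F ω u v + F ω u v' := by
    intro ω u v v'
    by_cases h : ω ∈ S
    · simp only [hFdef, if_pos h]; exact hf_addR ω h u v v'
    · simp [hFdef, if_neg h]
  have hF_smulR : ∀ ω (c : ℝ) (u v : H), F ω u (c • v) = c * F ω u v := by
    intro ω c u v
    by_cases h : ω ∈ S
    · simp only [hFdef, if_pos h]; exact hf_smulR ω h c u v
    · simp [hFdef, if_neg h]
  have hF_bound : ∀ ω (u v : H), ‖F ω u v‖ ≤ gS ω * ‖u‖ * ‖v‖ := by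
    intro ω u v
    rw [Real.norm_eq_abs]
    by_cases h : ω ∈ S
    · simpa [hFdef, hgSdef, h] using hf_bound ω h u v
    · simp [hFdef, hgSdef, h]
  set Gb : Ω → H →L[ℝ] H →L[ℝ] ℝ := fun ω =>
    LinearMap.mkContinuous₂
      (LinearMap.mk₂ ℝ (F ω) (fun u u' v => hF_addL ω u u' v)
        (fun c u v => by rw [smul_eq_mul]; exact hF_smulL ω c u v)
        (fun u v v' => hF_addR ω u v v')
        (fun c u v => by rw [smul_eq_mul]; exact hF_smulR ω c u v))
      (gS ω) (fun u v => hF_bound ω u v) with hGbdef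
  have hGb_apply : ∀ ω u v, Gb ω u v = F ω u v := fun ω u v => rfl
  have hGb_norm : ∀ ω, ‖Gb ω‖ ≤ gS ω := fun ω =>
    LinearMap.mkContinuous₂_norm_le _ (hgS0 ω) _
  -- (1) weak measurability
  have hmeasall : ∀ u v : H, Measurable[m] fun ω => Gb ω u v := by
    intro u v
    have hn : ∀ n : ℕ, Measurable[m]
        fun ω => Set.indicator S (G (a u n) (a v n)) ω :=
      fun n => (hGmeas _ _).indicator hSm
    have hlim : ∀ ω, Tendsto (fun n => Set.indicator S (G (a u n) (a v n)) ω)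
        atTop (𝓝 (Gb ω u v)) := by
      intro ω
      by_cases h : ω ∈ S
      · have := hflim ω h u v
        simp only [Set.indicator_of_mem h]
        rw [hGb_apply, hFdef]
        simpa [h] using this
      · simp only [Set.indicator_of_notMem h]
        rw [hGb_apply, hFdef]
        simp only [hGbdef]
        simp [hFdef, h]
    exact measurable_of_tendsto_metrizable hn (tendsto_pi_nhds.2 hlim)
  -- (2) a.e. agreement
  have haeeq : ∀ u v : H, (fun ω => Gb ω u v) =ᵐ[μ] G u v := by
    intro u v
    have hstep : ∀ n : ℕ, ∀ᵐ ω ∂μ,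
        |G u v ω - G (a u n) (a v n) ω|
          ≤ g ω * ‖u - a u n‖ * ‖v‖ + g ω * ‖a u n‖ * ‖v - a v n‖ := by
      intro n
      have e1 := hlinL (u - a u n) (a u n) v 1
      have e2 := hlinR (a u n) (v - a v n) (a v n) 1
      have d1 := hdom (u - a u n) v
      have d2 := hdom (a u n) (v - a v n)
      filter_upwards [e1, e2, d1, d2] with ω he1 he2 hd1 hd2
      have hu' : (1:ℝ) • (u - a u n) + a u n = u := by
        rw [one_smul]; abel
      have hv' : (1:ℝ) • (v - a v n) + a v n = v := by
        rw [one_smul]; abel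
      rw [hu'] at he1
      rw [hv'] at he2
      have heq : G u v ω - G (a u n) (a v n) ω
          = G (u - a u n) v ω + G (a u n) (v - a v n) ω := by
        rw [he1, he2]; ring
      rw [heq]
      calc |G (u - a u n) v ω + G (a u n) (v - a v n) ω|
          ≤ |G (u - a u n) v ω| + |G (a u n) (v - a v n) ω| := abs_add_le _ _
        _ ≤ g ω * ‖u - a u n‖ * ‖v‖ + g ω * ‖a u n‖ * ‖v - a v n‖ := by
            exact add_le_add hd1 hd2
    have hall : ∀ᵐ ω ∂μ, ∀ n : ℕ,
        |G u v ω - G (a u n) (a v n) ω|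
          ≤ g ω * ‖u - a u n‖ * ‖v‖ + g ω * ‖a u n‖ * ‖v - a v n‖ :=
      ae_all_iff.2 hstep
    filter_upwards [hall, hSae] with ω hω hωS
    have hb1 : Tendsto (fun n => g ω * ‖u - a u n‖ * ‖v‖
        + g ω * ‖a u n‖ * ‖v - a v n‖) atTop (𝓝 0) := by
      have hn1 : Tendsto (fun n => ‖u - a u n‖) atTop (𝓝 0) := by
        have := (tendsto_const_nhds (x := u).sub (haTends u)).norm
        simpa using this
      have hn2 : Tendsto (fun n => ‖v - a v n‖) atTop (𝓝 0) := by
        have := (tendsto_const_nhds (x := v).sub (haTends v)).norm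
        simpa using this
      have h1 := (hn1.const_mul (g ω)).mul_const ‖v‖
      have h2 := ((haTends u).norm.const_mul (g ω)).mul hn2
      have h1' : Tendsto (fun n => g ω * ‖u - a u n‖ * ‖v‖) atTop (𝓝 0) := by
        simpa using h1
      have h2' : Tendsto (fun n => g ω * ‖a u n‖ * ‖v - a v n‖) atTop (𝓝 0) := by
        simpa [mul_assoc] using h2
      simpa using h1'.add h2'
    have hd0 : Tendsto (fun n => G u v ω - G (a u n) (a v n) ω) atTop (𝓝 0) := by
      apply squeeze_zero_norm (fun n => ?_) hb1
      rw [Real.norm_eq_abs]; exact hω n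
    have hGlim : Tendsto (fun n => G (a u n) (a v n) ω) atTop (𝓝 (G u v ω)) := by
      have := (tendsto_const_nhds (x := G u v ω) (f := atTop (α := ℕ))).sub hd0
      simpa using this
    have heq : f ω u v = G u v ω := tendsto_nhds_unique (hflim ω hωS u v) hGlim
    rw [hGb_apply]
    simp only [hFdef]
    rw [if_pos hωS]
    exact heq
  -- (4) a.e. norm bound
  have haebound : ∀ᵐ ω ∂μ, ‖Gb ω‖ ≤ g ω := by
    filter_upwards [hSae] with ω hω
    have := hGb_norm ω
    simp only [hgSdef] at this
    rwa [if_pos hω] at this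
  -- (3) integrability
  obtain ⟨e, he⟩ := hDc.exists_eq_range ⟨0, hD0⟩
  set b : ℕ → H := fun n => if ‖e n‖ < 1 then e n else 0 with hbdef
  have hbD : ∀ n, b n ∈ D := by
    intro n
    by_cases h : ‖e n‖ < 1
    · simp only [hbdef, if_pos h]
      rw [he]; exact Set.mem_range_self n
    · simp only [hbdef, if_neg h]; exact hD0
  have hb1 : ∀ n, ‖b n‖ ≤ 1 := by
    intro n
    by_cases h : ‖e n‖ < 1 <;> simp [hbdef, h]
    exact h.le
  have hbdense : Metric.closedBall (0:H) 1 ⊆ closure (Set.range b) := by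
    refine (aux_dense_ball hDdense).trans (closure_mono ?_)
    rintro x ⟨hxD, hx1⟩
    rw [he] at hxD
    obtain ⟨n, hn⟩ := hxD
    refine ⟨n, ?_⟩
    have hx1' : ‖e n‖ < 1 := by rw [hn]; exact hx1
    simp only [hbdef]
    rw [if_pos hx1']
    exact hn
  set t : ℕ → Ω → ℝ := fun n ω => |Gb ω (b (Nat.unpair n).1) (b (Nat.unpair n).2)|
    with htdef
  have ht_meas : ∀ n, Measurable[m] (t n) := fun n => (hmeasall _ _).abs
  have ht_nonneg : ∀ n ω, 0 ≤ t n ω := fun n ω => abs_nonneg _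
  set M : ℕ → Ω → ℝ := fun k =>
    (Finset.range (k+1)).sup' Finset.nonempty_range_add_one t with hMdef
  have hM_apply : ∀ k ω, M k ω
      = (Finset.range (k+1)).sup' Finset.nonempty_range_add_one (fun n => t n ω) := by
    intro k ω
    rw [hMdef]
    exact Finset.sup'_apply _ _ _
  have hM_meas : ∀ k, Measurable[m] (M k) := by
    intro k
    exact Finset.measurable_sup' _ fun n _ => ht_meas n
  have ht_le : ∀ n ω, t n ω ≤ ‖Gb ω‖ := by
    intro n ω
    calc t n ω = ‖Gb ω (b (Nat.unpair n).1) (b (Nat.unpair n).2)‖ := by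
          rw [htdef]; simp [Real.norm_eq_abs]
      _ ≤ ‖Gb ω‖ * ‖b (Nat.unpair n).1‖ * ‖b (Nat.unpair n).2‖ :=
          ContinuousLinearMap.le_opNorm₂ _ _ _
      _ ≤ ‖Gb ω‖ * 1 * 1 := by
          gcongr <;> first | exact norm_nonneg _ | exact hb1 _
      _ = ‖Gb ω‖ := by ring
  have hM_le : ∀ k ω, M k ω ≤ ‖Gb ω‖ := by
    intro k ω
    rw [hM_apply]
    exact Finset.sup'_le _ _ fun n _ => ht_le n ω
  have ht_le_M : ∀ n ω, t n ω ≤ M n ω := by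
    intro n ω
    rw [hM_apply]
    exact Finset.le_sup' (f := fun i => t i ω) (Finset.self_mem_range_succ n)
  have hM_tendsto : ∀ ω, Tendsto (fun k => M k ω) atTop (𝓝 ‖Gb ω‖) := by
    intro ω
    have hbdd : BddAbove (Set.range fun k => M k ω) := by
      refine ⟨‖Gb ω‖, ?_⟩
      rintro x ⟨k, rfl⟩
      exact hM_le k ω
    have hmono : Monotone fun k => M k ω := by
      intro k k' hk
      show M k ω ≤ M k' ω
      rw [hM_apply, hM_apply]
      exact Finset.sup'_mono _ (Finset.range_subset_range.2 (by omega)) _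
    have h1 := tendsto_atTop_ciSup hmono hbdd
    have hC0 : 0 ≤ ⨆ k, M k ω :=
      le_trans (le_trans (ht_nonneg 0 ω) (ht_le_M 0 ω)) (le_ciSup hbdd 0)
    have hiSup : (⨆ k, M k ω) = ‖Gb ω‖ := by
      refine le_antisymm (ciSup_le fun k => hM_le k ω) ?_
      refine aux_opNorm_le hbdense hC0 ?_
      rintro x ⟨i, rfl⟩ y ⟨j, rfl⟩
      have h2 : t (Nat.pair i j) ω = |Gb ω (b i) (b j)| := by
        rw [htdef]; simp [Nat.unpair_pair]
      calc |Gb ω (b i) (b j)| = t (Nat.pair i j) ω := h2.symm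
        _ ≤ M (Nat.pair i j) ω := ht_le_M _ ω
        _ ≤ ⨆ k, M k ω := le_ciSup hbdd _
    rwa [hiSup] at h1
  have hnorm_meas : Measurable[m] fun ω => ‖Gb ω‖ :=
    measurable_of_tendsto_metrizable hM_meas (tendsto_pi_nhds.2 hM_tendsto)
  have hint : Integrable (fun ω => ‖Gb ω‖) μ := by
    have hb : ∀ᵐ ω ∂μ, ‖‖Gb ω‖‖ ≤ |g ω| := by
      refine Filter.Eventually.of_forall fun ω => ?_
      have h0 : (0:ℝ) ≤ ‖Gb ω‖ := ContinuousLinearMap.opNorm_nonneg _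
      rw [Real.norm_eq_abs, abs_of_nonneg h0]
      refine le_trans (hGb_norm ω) ?_
      simp only [hgSdef]
      by_cases h : ω ∈ S
      · rw [if_pos h]; exact le_abs_self _
      · rw [if_neg h]; exact abs_nonneg _
    exact Integrable.mono' hgint.abs
      ((hnorm_meas.mono hm le_rfl).aestronglyMeasurable) hb
  exact ⟨Gb, hmeasall, hint, haeeq, haebound⟩
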